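/- With E(j,s) = ω(j+1/2) + sΩ/2 and the matrix elements V as in the Rabi model, the second-order Rayleigh–Schrödinger coefficient E2(j,s) = −Σ_{(m,t)≠(j,s)} (E(m,t) − E(j,s))⁻¹ |V_{(j,s),(m,t)}|² equals (ω + sΩ(2j+1))/(2(Ω² − ω²)), for ω ≠ Ω with Ω not an integer multiple of ω. -/

import Mathlib

set_option maxRecDepth 8000


/-- The second-order Rayleigh–Schrödinger coefficient
`E2(j,s) = −Σ_{(m,t)≠(j,s)} (E(m,t) − E(j,s))⁻¹ |V_{(j,s),(m,t)}|²` of the Rabi model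
equals `(ω + sΩ(2j+1))/(2(Ω² − ω²))`.  Signs are encoded by `Bool` via `σ`. -/
theorem rabi_second_order_coefficient
    (ω Ω : ℝ) (hω : 0 < ω) (hΩ : 0 < Ω) (hne : ω ≠ Ω)
    (hmult : ¬ ∃ n : ℤ, Ω = n * ω)
    (σ : Bool → ℝ) (hσ : σ true = 1 ∧ σ false = -1)
    (E : ℕ → Bool → ℝ)
    (hE : ∀ (j : ℕ) (s : Bool), E j s = ω * (j + 1/2) + σ s * Ω / 2)
    (V : ℕ × Bool → ℕ × Bool → ℝ)
    (hV : ∀ p q : ℕ × Bool, V p q =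
      ((if p.1 + 1 = q.1 then Real.sqrt ((q.1 : ℝ) / 2) else 0) +
       (if p.1 = q.1 + 1 then Real.sqrt (((q.1 : ℝ) + 1) / 2) else 0)) *
      (if p.2 = q.2 then 0 else 1))
    (E2 : ℕ → Bool → ℝ)
    (hE2 : ∀ (j : ℕ) (s : Bool), E2 j s =
      -∑' p : {p : ℕ × Bool // p ≠ (j, s)},
        (E (p : ℕ × Bool).1 (p : ℕ × Bool).2 - E j s)⁻¹ * (V (j, s) p) ^ 2)
    (j : ℕ) (s : Bool) :
    E2 j s = (ω + σ s * Ω * (2 * (j : ℝ) + 1)) / (2 * (Ω ^ 2 - ω ^ 2)) := by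
  have hσns : σ (!s) = - σ s := by cases s <;> simp [hσ.1, hσ.2]
  have hs2 : σ s ^ 2 = 1 := by cases s <;> simp [hσ.1, hσ.2] <;> ring
  -- nonvanishing of denominators
  have hωΩ : ω ^ 2 - Ω ^ 2 ≠ 0 := by
    have h1 : ω - Ω ≠ 0 := sub_ne_zero.mpr hne
    have h2 : ω + Ω ≠ 0 := by positivity
    have h3 : ω ^ 2 - Ω ^ 2 = (ω - Ω) * (ω + Ω) := by ring
    rw [h3]; exact mul_ne_zero h1 h2
  have hΩω : Ω ^ 2 - ω ^ 2 ≠ 0 := by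
    intro h; apply hωΩ; linarith
  have hprod : (ω - σ s * Ω) * (ω + σ s * Ω) = ω ^ 2 - Ω ^ 2 := by
    have h4 : (ω - σ s * Ω) * (ω + σ s * Ω) = ω ^ 2 - σ s ^ 2 * Ω ^ 2 := by ring
    rw [h4, hs2]; ring
  have hd1 : ω - σ s * Ω ≠ 0 := by
    intro h; apply hωΩ; rw [← hprod, h, zero_mul]
  have hd2 : ω + σ s * Ω ≠ 0 := by
    intro h; apply hωΩ; rw [← hprod, h, mul_zero]
  have hd3 : -ω - σ s * Ω ≠ 0 := by
    intro h; apply hd2; linarith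
  -- the function in the tsum
  set g : ℕ × Bool → ℝ := fun p => (E p.1 p.2 - E j s)⁻¹ * (V (j, s) p) ^ 2 with hg
  have hg_diag : g (j, s) = 0 := by
    have : V (j, s) (j, s) = 0 := by rw [hV]; simp
    simp [hg, this]
  -- tsum over the subtype equals tsum over the whole type
  have h1 : (∑' p : {p : ℕ × Bool // p ≠ (j, s)},
        (E (p : ℕ × Bool).1 (p : ℕ × Bool).2 - E j s)⁻¹ * (V (j, s) p) ^ 2)
      = ∑' p : ℕ × Bool, g p := by
    have h2 : ∑' (x : ℕ × Bool), ({p : ℕ × Bool | p ≠ (j, s)}).indicator g x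
        = ∑' p : ℕ × Bool, g p := by
      apply tsum_congr
      intro p
      by_cases hp : p = (j, s)
      · rw [Set.indicator_of_notMem (by simp [hp]), hp, hg_diag]
      · rw [Set.indicator_of_mem (by simpa using hp)]
    exact (tsum_subtype {p : ℕ × Bool | p ≠ (j, s)} g).trans h2
  -- the finite support
  have hzero : ∀ p : ℕ × Bool, p ∉ ({(j + 1, !s), (j - 1, !s)} : Finset (ℕ × Bool)) →
      g p = 0 := by
    rintro ⟨m, t⟩ hp
    rw [Finset.mem_insert, Finset.mem_singleton] at hp
    push_neg at hp
    by_cases ht : s = t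
    · have hv : V (j, s) (m, t) = 0 := by rw [hV]; simp [ht]
      simp [hg, hv]
    · have ht' : t = !s := by
        cases s <;> cases t <;> first | rfl | exact absurd rfl ht
      subst ht'
      have hm1 : ¬ (j + 1 = m) := by
        intro h; exact hp.1 (by simp [Prod.ext_iff]; omega)
      have hm2 : ¬ (j = m + 1) := by
        intro h; exact hp.2 (by simp [Prod.ext_iff]; omega)
      have hv : V (j, s) (m, !s) = 0 := by rw [hV]; simp [hm1, hm2]
      simp [hg, hv]
  have hpairne : ((j + 1 : ℕ), !s) ≠ ((j - 1 : ℕ), !s) := by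
    intro h; have := (Prod.ext_iff.mp h).1; omega
  have hsum : (∑' p : ℕ × Bool, g p) = g (j + 1, !s) + g (j - 1, !s) := by
    rw [tsum_eq_sum hzero, Finset.sum_pair hpairne]
  -- evaluate the two terms
  have hVa : V (j, s) (j + 1, !s) = Real.sqrt (((j : ℝ) + 1) / 2) := by
    have h5 : ¬ (j = j + 1 + 1) := by omega
    rw [hV]; simp [h5]
  have hEa : E (j + 1) (!s) - E j s = ω - σ s * Ω := by
    rw [hE, hE, hσns]; push_cast; ring
  have hga : g (j + 1, !s) = (ω - σ s * Ω)⁻¹ * (((j : ℝ) + 1) / 2) := by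
    show (E (j + 1) (!s) - E j s)⁻¹ * (V (j, s) (j + 1, !s)) ^ 2 = _
    rw [hVa, hEa, Real.sq_sqrt (by positivity)]
  rcases j with _ | n
  · -- j = 0
    have hVb : V (0, s) (0 - 1, !s) = 0 := by
      rw [hV]; norm_num
    have hgb : g (0 - 1, !s) = 0 := by
      show (E (0 - 1) (!s) - E 0 s)⁻¹ * (V (0, s) (0 - 1, !s)) ^ 2 = 0
      rw [hVb]; ring
    rw [hE2, h1, hsum, hga, hgb]
    simp only [Nat.cast_zero]
    field_simp
    linear_combination (Ω ^ 2) * hs2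
  · -- j = n + 1
    have hVb : V (n + 1, s) (n + 1 - 1, !s) = Real.sqrt (((n : ℝ) + 1) / 2) := by
      have h6 : ¬ (n + 1 + 1 = n) := by omega
      rw [hV]
      simp only [Nat.add_sub_cancel, h6, if_false, if_pos rfl]
      cases s <;> norm_num
    have hEb : E (n + 1 - 1) (!s) - E (n + 1) s = -ω - σ s * Ω := by
      rw [hE, hE, hσns]
      have h8 : (n + 1 - 1 : ℕ) = n := by omega
      rw [h8]; push_cast; ring
    have hgb : g (n + 1 - 1, !s) = (-ω - σ s * Ω)⁻¹ * (((n : ℝ) + 1) / 2) := by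
      show (E (n + 1 - 1) (!s) - E (n + 1) s)⁻¹ * (V (n + 1, s) (n + 1 - 1, !s)) ^ 2 = _
      rw [hVb, hEb, Real.sq_sqrt (by positivity)]
    rw [hE2, h1, hsum, hga, hgb]
    push_cast
    field_simp
    linear_combination (-(2 * (n : ℝ) * σ s * Ω ^ 3 + ω * Ω ^ 2 + 3 * σ s * Ω ^ 3)) * hs2
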